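/- Let T be a Wang set and let G be its underlying directed multigraph (vertices are the horizontal colors occurring as west or east color of a tile of T, and each tile t gives one edge from w(t) to e(t)). If G contains a strongly connected component whose set of edges forms a single directed cycle (every vertex of the component has exactly one outgoing edge inside the component, and these edges form one cycle through all vertices of the component), then T is not minimally aperiodic. -/

import Mathlib

structure WangTile (H V : Type*) where
  west : H
  east : H
  south : V
  north : V
deriving DecidableEq

def TilingOn {H V : Type*} (T : Set (WangTile H V)) (X : Set (ℤ × ℤ))
    (f : ℤ × ℤ → WangTile H V) : Prop :=
  (∀ p ∈ X, f p ∈ T) ∧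
  (∀ x y : ℤ, (x, y) ∈ X → (x + 1, y) ∈ X →
    (f (x, y)).east = (f (x + 1, y)).west) ∧
  (∀ x y : ℤ, (x, y) ∈ X → (x, y + 1) ∈ X →
    (f (x, y)).north = (f (x, y + 1)).south)

def Tiling {H V : Type*} (T : Set (WangTile H V)) (f : ℤ × ℤ → WangTile H V) : Prop :=
  TilingOn T Set.univ f

def TilesPlane {H V : Type*} (T : Set (WangTile H V)) : Prop :=
  ∃ f, Tiling T f

def PeriodicTiling {H V : Type*} (f : ℤ × ℤ → WangTile H V) : Prop :=
  ∃ u v : ℤ, (u, v) ≠ (0, 0) ∧ ∀ x y : ℤ, f (x + u, y + v) = f (x, y)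

def Aperiodic {H V : Type*} (T : Set (WangTile H V)) : Prop :=
  TilesPlane T ∧ ∀ f, Tiling T f → ¬ PeriodicTiling f

def MinimallyAperiodic {H V : Type*} (T : Set (WangTile H V)) : Prop :=
  Aperiodic T ∧ ∀ S : Set (WangTile H V), S ⊂ T → ¬ TilesPlane S

/-- One horizontal step in the underlying graph of a Wang set: there is a tile of `T`
with west color `c` and east color `c'`. -/
def HStep {H V : Type*} (T : Set (WangTile H V)) (c c' : H) : Prop :=
  ∃ t ∈ T, t.west = c ∧ t.east = c'

lemma tiling_shift {H V : Type*} {T : Set (WangTile H V)} {f : ℤ × ℤ → WangTile H V}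
    (hf : Tiling T f) (u v : ℤ) : Tiling T (fun p => f (p.1 + u, p.2 + v)) := by
  refine ⟨fun p _ => hf.1 _ trivial, fun x y _ _ => ?_, fun x y _ _ => ?_⟩
  · have := hf.2.1 (x + u) (y + v) trivial trivial
    simpa [add_right_comm] using this
  · have := hf.2.2 (x + u) (y + v) trivial trivial
    simpa [add_right_comm, add_assoc] using this

lemma exists_ulim {α : Type*} (U : Ultrafilter ℕ) {s : Set α} (hs : s.Finite)
    (F : ℕ → α) (hF : ∀ j, F j ∈ s) : ∃ t, {j | F j = t} ∈ U := by
  have hmem : (⋃ t ∈ s, {j : ℕ | F j = t}) ∈ U := by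
    have : (⋃ t ∈ s, {j : ℕ | F j = t}) = Set.univ := by
      ext j; simp only [Set.mem_iUnion, Set.mem_setOf_eq, Set.mem_univ, iff_true]
      exact ⟨F j, hF j, rfl⟩
    rw [this]; exact Filter.univ_mem
  rcases (Ultrafilter.finite_biUnion_mem_iff hs).1 hmem with ⟨t, _, ht⟩
  exact ⟨t, ht⟩

lemma limit_tiling {H V : Type*} {T : Set (WangTile H V)} (hT : T.Finite)
    (U : Ultrafilter ℕ) (F : ℕ → ℤ × ℤ → WangTile H V) (hF : ∀ j, Tiling T (F j)) :
    ∃ g, Tiling T g ∧ ∀ p, {j | F j p = g p} ∈ U := by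
  have hex : ∀ p : ℤ × ℤ, ∃ t, {j | F j p = t} ∈ U :=
    fun p => exists_ulim U hT (fun j => F j p) (fun j => (hF j).1 p trivial)
  choose g hg using hex
  refine ⟨g, ⟨fun p _ => ?_, fun x y _ _ => ?_, fun x y _ _ => ?_⟩, hg⟩
  · obtain ⟨j, hj⟩ := Ultrafilter.nonempty_of_mem (hg p)
    rw [← hj]; exact (hF j).1 p trivial
  · obtain ⟨j, hj1, hj2⟩ := Ultrafilter.nonempty_of_mem
      (Filter.inter_mem (hg (x, y)) (hg (x + 1, y)) : _ ∈ U)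
    rw [← hj1, ← hj2]; exact (hF j).2.1 x y trivial trivial
  · obtain ⟨j, hj1, hj2⟩ := Ultrafilter.nonempty_of_mem
      (Filter.inter_mem (hg (x, y)) (hg (x, y + 1)) : _ ∈ U)
    rw [← hj1, ← hj2]; exact (hF j).2.2 x y trivial trivial

/-- if the underlying directed multigraph of `T` contains a strongly
connected component `C` whose set of edges forms a single directed cycle (every vertex
of `C` has exactly one outgoing edge inside `C`, these edges stay in `C` and follow a
map `next` whose iterates sweep out all of `C`), then `T` is not minimally aperiodic. -/
theorem not_minimallyAperiodic_of_cycle_scc {H V : Type*} (T : Set (WangTile H V))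
    (hT : T.Finite) (C : Set H) (hne : C.Nonempty)
    -- `C` is strongly connected:
    (hconn : ∀ u ∈ C, ∀ v ∈ C, Relation.ReflTransGen (HStep T) u v)
    -- `C` is maximal with this property (it is a strongly connected component):
    (hmax : ∀ u ∈ C, ∀ w : H, Relation.ReflTransGen (HStep T) u w →
      Relation.ReflTransGen (HStep T) w u → w ∈ C)
    (next : H → H) (hnextC : ∀ c ∈ C, next c ∈ C)
    -- every vertex of `C` has exactly one outgoing edge inside the component:
    (huniq : ∀ c ∈ C, ∃! t : WangTile H V, t ∈ T ∧ t.west = c ∧ t.east ∈ C)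
    -- the edges inside the component follow `next`:
    (hedge : ∀ t ∈ T, t.west ∈ C → t.east ∈ C → t.east = next t.west)
    -- these edges form one cycle through all the vertices of the component:
    (hcycle : ∀ c ∈ C, ∀ c' ∈ C, ∃ m : ℕ, next^[m] c = c') :
    ¬ MinimallyAperiodic T := by
  rintro ⟨⟨⟨f0, hf0⟩, hnoper⟩, hminimal⟩
  classical
  -- the set of "cycle" tiles
  set D : Set (WangTile H V) := {t | t.west ∈ C ∧ t.east ∈ C} with hD
  obtain ⟨c₀, hc₀⟩ := hne
  obtain ⟨t₀, ⟨ht₀T, ht₀w, ht₀e⟩, -⟩ := huniq c₀ hc₀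
  have ht₀D : t₀ ∈ D := ⟨ht₀w ▸ hc₀, ht₀e⟩
  have hEnotile : ¬ TilesPlane (T \ D) := by
    refine hminimal _ (Set.ssubset_iff_subset_ne.mpr ⟨Set.diff_subset, fun h => ?_⟩)
    rw [← h] at ht₀T
    exact ht₀T.2 ht₀D
  set U : Ultrafilter ℕ := Ultrafilter.of Filter.atTop with hU
  have hUle : (U : Filter ℕ) ≤ Filter.atTop := Ultrafilter.of_le _
  -- reachability along a row
  have hreach : ∀ (f : ℤ × ℤ → WangTile H V), Tiling T f → ∀ y u v : ℤ, u ≤ v →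
      Relation.ReflTransGen (HStep T) ((f (u, y)).west) ((f (v, y)).west) := by
    intro f hf y u v huv
    refine Int.le_induction (motive := fun v _ => Relation.ReflTransGen (HStep T) (f (u, y)).west (f (v, y)).west) ?_ ?_ v huv
    · exact Relation.ReflTransGen.refl
    · intro v _ ih
      exact ih.tail ⟨f (v, y), hf.1 _ trivial, rfl, (hf.2.1 v y trivial trivial)⟩
  have hinterval : ∀ f, Tiling T f → ∀ y x₁ x₂ x₃ : ℤ, x₁ ≤ x₂ → x₂ ≤ x₃ →
      (f (x₁, y)).west ∈ C → (f (x₃, y)).west ∈ C → (f (x₂, y)).west ∈ C := by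
    intro f hf y x₁ x₂ x₃ h12 h23 h1 h3
    exact hmax _ h1 _ (hreach f hf y x₁ x₂ h12)
      ((hreach f hf y x₂ x₃ h23).trans (hconn _ h3 _ h1))
  -- window density of cycle tiles
  have hwin : ∃ k : ℕ, ∀ f, Tiling T f → ∀ x y : ℤ, ∃ a b : ℤ,
      |a - x| ≤ (k : ℤ) + 1 ∧ |b - y| ≤ (k : ℤ) + 1 ∧ f (a, b) ∈ D := by
    by_contra hcon
    push_neg at hcon
    choose f hf x y hclean using hcon
    set F : ℕ → ℤ × ℤ → WangTile H V := fun j p => f j (p.1 + x j, p.2 + y j) with hF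
    obtain ⟨g, hg, hgU⟩ := limit_tiling hT U F (fun j => tiling_shift (hf j) _ _)
    refine hEnotile ⟨g, ⟨fun p _ => ⟨hg.1 p trivial, ?_⟩, hg.2.1, hg.2.2⟩⟩
    have hB : {j : ℕ | p.1.natAbs ≤ j ∧ p.2.natAbs ≤ j} ∈ Filter.atTop := by
      filter_upwards [Filter.mem_atTop (max p.1.natAbs p.2.natAbs)] with j hj
      exact ⟨le_trans (le_max_left _ _) hj, le_trans (le_max_right _ _) hj⟩
    obtain ⟨j, hj1, hj2⟩ := Ultrafilter.nonempty_of_mem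
      (Filter.inter_mem (hgU p) (hUle hB) : _ ∈ U)
    rw [← hj1]
    refine hclean j (p.1 + x j) (p.2 + y j) ?_ ?_
    · rw [add_sub_cancel_right]
      calc |p.1| ≤ (p.1.natAbs : ℤ) := le_of_eq (Int.abs_eq_natAbs _)
        _ ≤ (j : ℤ) := by exact_mod_cast hj2.1
        _ ≤ (j : ℤ) + 1 := by linarith
    · rw [add_sub_cancel_right]
      calc |p.2| ≤ (p.2.natAbs : ℤ) := le_of_eq (Int.abs_eq_natAbs _)
        _ ≤ (j : ℤ) := by exact_mod_cast hj2.2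
        _ ≤ (j : ℤ) + 1 := by linarith
  obtain ⟨k₀, hwin⟩ := hwin
  set K : ℤ := (k₀ : ℤ) + 1 with hK
  have hKpos : 0 < K := by positivity
  -- every tiling has, above any given height, a row with an eventual tail in C
  have hrowtail : ∀ f, Tiling T f → ∀ ylo : ℤ, ∃ ys ≥ ylo, ∃ x₀ : ℤ,
      ∀ x ≥ x₀, (f (x, ys)).west ∈ C := by
    intro f hf ylo
    have hsel : ∀ j : ℕ, ∃ a b : ℤ, |a - (2 * K + 1) * j| ≤ K ∧ |b - (ylo + K)| ≤ K ∧
        f (a, b) ∈ D := fun j => hwin f hf ((2 * K + 1) * j) (ylo + K)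
    choose a b ha hb hD' using hsel
    have hbmem : ∀ j, b j ∈ Finset.Icc ylo (ylo + 2 * K) := by
      intro j
      have := abs_le.1 (hb j)
      rw [Finset.mem_Icc]; omega
    obtain ⟨⟨ys, hysmem⟩, hfib⟩ :=
      Finite.exists_infinite_fiber (fun j : ℕ => (⟨b j, hbmem j⟩ : Finset.Icc ylo (ylo + 2 * K)))
    have hS : {j : ℕ | b j = ys}.Infinite := by
      have := Set.infinite_coe_iff.1 hfib
      refine this.mono ?_
      intro j hj
      simpa using congrArg Subtype.val hj
    obtain ⟨j₀, hj₀⟩ := hS.nonempty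
    refine ⟨ys, by rw [Finset.mem_Icc] at hysmem; omega, a j₀, fun x hx => ?_⟩
    obtain ⟨j, hjS, hjgt⟩ := hS.exists_gt (x + K).toNat
    have hja : x ≤ a j := by
      have h1 : x + K ≤ (j : ℤ) := le_trans (Int.self_le_toNat _) (by exact_mod_cast hjgt.le)
      have h2 := (abs_le.1 (ha j)).1
      have h3 : (j : ℤ) ≤ (2 * K + 1) * j := by nlinarith [Int.ofNat_nonneg j]
      omega
    have hw₀ : (f (a j₀, ys)).west ∈ C := by
      have := hD' j₀; rw [hj₀] at this; exact this.1
    have hwj : (f (a j, ys)).west ∈ C := by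
      have := hD' j; rw [hjS] at this; exact this.1
    exact hinterval f hf ys (a j₀) x (a j) hx hja hw₀ hwj
  -- limits of horizontal shifts: rows with tails in C become full rows in C
  have hlim : ∀ f, Tiling T f → ∃ g, Tiling T g ∧
      ∀ y x : ℤ, (∃ x₀, ∀ x' ≥ x₀, (f (x', y)).west ∈ C) → (g (x, y)).west ∈ C := by
    intro f hf
    set F : ℕ → ℤ × ℤ → WangTile H V := fun j p => f (p.1 + (j : ℤ), p.2 + 0) with hF
    obtain ⟨g, hg, hgU⟩ := limit_tiling hT U F (fun j => tiling_shift hf _ 0)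
    refine ⟨g, hg, ?_⟩
    rintro y x ⟨x₀, hx₀⟩
    have hB : {j : ℕ | (x₀ - x).toNat ≤ j} ∈ Filter.atTop := Filter.mem_atTop _
    obtain ⟨j, hj1, hj2⟩ := Ultrafilter.nonempty_of_mem
      (Filter.inter_mem (hgU (x, y)) (hUle hB) : _ ∈ U)
    rw [← hj1]
    simp only [hF, add_zero]
    refine hx₀ (x + j) ?_
    have := Int.self_le_toNat (x₀ - x)
    have : ((x₀ - x).toNat : ℤ) ≤ j := by exact_mod_cast hj2
    omega
  -- build a tiling with two full rows in C
  obtain ⟨y₁, -, x₁, hx₁⟩ := hrowtail f0 hf0 0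
  obtain ⟨g1, hg1, hg1p⟩ := hlim f0 hf0
  have hg1row : ∀ x, (g1 (x, y₁)).west ∈ C := fun x => hg1p y₁ x ⟨x₁, hx₁⟩
  obtain ⟨y₂, hy₂ge, x₂, hx₂⟩ := hrowtail g1 hg1 (y₁ + 1)
  obtain ⟨g, hg, hgp⟩ := hlim g1 hg1
  have hrow1 : ∀ x, (g (x, y₁)).west ∈ C := fun x => hgp y₁ x ⟨0, fun x' _ => hg1row x'⟩
  have hrow2 : ∀ x, (g (x, y₂)).west ∈ C := fun x => hgp y₂ x ⟨x₂, hx₂⟩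
  have hy12 : y₁ < y₂ := by omega
  -- the two rows as sequences of colors
  set a : ℤ → H := fun x => (g (x, y₁)).west with haDef
  set b : ℤ → H := fun x => (g (x, y₂)).west with hbDef
  have ha : ∀ x, a (x + 1) = next (a x) := by
    intro x
    have h1 : (g (x, y₁)).east = a (x + 1) := hg.2.1 x y₁ trivial trivial
    rw [← h1]
    exact hedge _ (hg.1 _ trivial) (hrow1 x) (h1 ▸ hrow1 (x + 1))
  have hb : ∀ x, b (x + 1) = next (b x) := by
    intro x
    have h1 : (g (x, y₂)).east = b (x + 1) := hg.2.1 x y₂ trivial trivial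
    rw [← h1]
    exact hedge _ (hg.1 _ trivial) (hrow2 x) (h1 ▸ hrow2 (x + 1))
  have hiterC : ∀ (m : ℕ), ∀ c ∈ C, next^[m] c ∈ C := by
    intro m
    induction m with
    | zero => intro c hc; simpa using hc
    | succ m ih =>
      intro c hc
      rw [Function.iterate_succ_apply]
      exact ih _ (hnextC c hc)
  have hiter : ∀ (c : ℤ → H), (∀ x, c (x + 1) = next (c x)) →
      ∀ (x : ℤ) (m : ℕ), c (x + m) = next^[m] (c x) := by
    intro c hc x m
    induction m with
    | zero => simp
    | succ m ih =>
      have : x + ((m : ℤ) + 1) = (x + m) + 1 := by ring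
      rw [Nat.cast_succ, this, hc, ih, Function.iterate_succ_apply']
  -- a common period for `next` on `C`
  have hCfin : C.Finite := by
    refine (hT.image WangTile.west).subset ?_
    intro c hc
    obtain ⟨t, ⟨htT, htw, -⟩, -⟩ := huniq c hc
    exact ⟨t, htT, htw⟩
  have hper : ∀ c ∈ C, ∃ m : ℕ, 0 < m ∧ next^[m] c = c := by
    intro c hc
    obtain ⟨m, hm⟩ := hcycle (next c) (hnextC c hc) c hc
    exact ⟨m + 1, Nat.succ_pos _, by rw [Function.iterate_succ_apply]; exact hm⟩
  choose! per hper0 hperfix using hper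
  obtain ⟨n, hnpos, hfixn⟩ : ∃ n : ℕ, 0 < n ∧ ∀ c ∈ C, next^[n] c = c := by
    refine ⟨∏ c ∈ hCfin.toFinset, per c,
      Finset.prod_pos fun c hc => hper0 c (hCfin.mem_toFinset.1 hc), fun c hc => ?_⟩
    obtain ⟨d, hd⟩ := Finset.dvd_prod_of_mem per (hCfin.mem_toFinset.2 hc)
    rw [hd, Function.iterate_mul]
    exact Function.iterate_fixed (hperfix c hc) d
  have hinj : ∀ u ∈ C, ∀ v ∈ C, next u = next v → u = v := by
    intro u hu v hv huv
    obtain ⟨m, rfl⟩ : ∃ m, n = m + 1 := ⟨n - 1, (Nat.succ_pred_eq_of_pos hnpos).symm⟩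
    have h1 : next^[m + 1] u = next^[m + 1] v := by
      rw [Function.iterate_succ_apply, Function.iterate_succ_apply, huv]
    rw [hfixn u hu, hfixn v hv] at h1
    exact h1
  -- align the two rows
  obtain ⟨s, hs⟩ := hcycle (b 0) (hrow2 0) (a 0) (hrow1 0)
  have hcomm : ∀ z, next^[s] (next z) = next (next^[s] z) := by
    intro z
    rw [← Function.iterate_succ_apply, Function.iterate_succ_apply']
  have hP : ∀ x : ℤ, next^[s] (b x) = a x := by
    intro x
    induction x using Int.induction_on with
    | zero => exact hs
    | succ i ih => rw [hb, hcomm, ih, ← ha]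
    | pred i ih =>
      refine hinj _ (hiterC s _ (hrow2 _)) _ (hrow1 _) ?_
      have e1 : (-(i : ℤ) - 1) + 1 = -(i : ℤ) := by ring
      rw [← hcomm, ← hb, e1, ih, ← ha, e1]
  have hab : ∀ z : ℤ, a (z - s) = b z := by
    intro z
    have h1 : b ((z - s) + s) = next^[s] (b (z - s)) := hiter b hb (z - s) s
    have h2 : (z - s) + (s : ℤ) = z := by ring
    rw [h2] at h1
    rw [h1, hP]
  -- the rows of tiles agree up to shift
  have hrows : ∀ z : ℤ, g (z, y₂) = g (z - s, y₁) := by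
    intro z
    obtain ⟨t, -, htuniq⟩ := huniq (b z) (hrow2 z)
    have h2 : g (z, y₂) = t := by
      refine htuniq _ ⟨hg.1 _ trivial, rfl, ?_⟩
      rw [hg.2.1 z y₂ trivial trivial]
      exact hrow2 (z + 1)
    have h1 : g (z - s, y₁) = t := by
      refine htuniq _ ⟨hg.1 _ trivial, hab z, ?_⟩
      rw [hg.2.1 (z - s) y₁ trivial trivial]
      exact hrow1 (z - s + 1)
    rw [h2, h1]
  -- build a periodic tiling
  set p : ℤ := y₂ - y₁ with hp
  have hppos : 0 < p := by omega
  set F : ℤ × ℤ → WangTile H V :=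
    fun q => g (q.1 - ((q.2 - y₁) / p) * s, y₁ + (q.2 - y₁) % p) with hFdef
  have hdm : ∀ d q' r' : ℤ, 0 ≤ r' → r' < p → d = p * q' + r' → d / p = q' ∧ d % p = r' := by
    intro d q' r' h0 h1 h2
    constructor
    · rw [h2, add_comm, Int.add_mul_ediv_left _ _ hppos.ne', Int.ediv_eq_zero_of_lt h0 h1,
        zero_add]
    · rw [h2, add_comm, Int.add_mul_emod_self_left, Int.emod_eq_of_lt h0 h1]
  have hFtiling : Tiling T F := by
    refine ⟨fun q _ => hg.1 _ trivial, fun x y _ _ => ?_, fun x y _ _ => ?_⟩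
    · show (g _).east = (g _).west
      have := hg.2.1 (x - ((y - y₁) / p) * s) (y₁ + (y - y₁) % p) trivial trivial
      rw [this]
      congr 2
      ring_nf
    · show (g _).north = (g _).south
      set d : ℤ := y - y₁ with hd'
      have h0 : 0 ≤ d % p := Int.emod_nonneg d hppos.ne'
      have h1 : d % p < p := Int.emod_lt_of_pos d hppos
      have hde : d = p * (d / p) + d % p := (Int.mul_ediv_add_emod d p).symm
      have hd1 : y + 1 - y₁ = d + 1 := by rw [hd']; ring
      rcases lt_or_eq_of_le (by omega : d % p + 1 ≤ p) with hlt | heq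
      · have h := hdm (d + 1) (d / p) (d % p + 1) (by omega) hlt (by omega)
        rw [hd1, h.1, h.2]
        have := hg.2.2 (x - d / p * s) (y₁ + d % p) trivial trivial
        rw [this]
        congr 2
        ring_nf
      · have h := hdm (d + 1) (d / p + 1) 0 le_rfl hppos (by rw [mul_add]; omega)
        rw [hd1, h.1, h.2, add_zero]
        have hy2 : y₁ + d % p + 1 = y₂ := by omega
        have hv := hg.2.2 (x - d / p * s) (y₁ + d % p) trivial trivial
        rw [hv, hy2, hrows]
        congr 2
        ring_nf
  refine hnoper F hFtiling ⟨(s : ℤ), p, ?_, ?_⟩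
  · intro h
    rw [Prod.mk.injEq] at h
    omega
  · intro x y
    show g _ = g _
    set d : ℤ := y - y₁ with hd'
    have e1 : y + p - y₁ = d + p * 1 := by rw [hd']; ring
    rw [e1, Int.add_mul_ediv_left d 1 hppos.ne', Int.add_mul_emod_self_left]
    have e4 : x + (s : ℤ) - (d / p + 1) * (s : ℤ) = x - d / p * (s : ℤ) := by ring
    rw [e4]
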